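/- Let P ∈ F_q[T] be a monic irreducible polynomial of degree at least 1. If χ_q(P(0)) = 1 (i.e., the Legendre symbol (P/T) equals 1), then P(−S²) is reducible in F_q[S]. -/

import Mathlib

open Polynomial Finset

/-- If `P` is a monic irreducible in `F_q[T]` (`q` odd) of degree at least `1`
with Legendre symbol `(P/T) = χ_q(P(0)) = 1`, then `P(-S²)` is reducible in
`F_q[S]`. -/
theorem reducible_of_legendre_one (F : Type) [Field F] [Fintype F] [DecidableEq F]
    (hq : Odd (Fintype.card F)) (P : F[X]) (hP : P.Monic) (hirr : Irreducible P)
    (hdeg : 1 ≤ P.natDegree) (hleg : quadraticChar F (P.eval 0) = 1) :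
    ¬ Irreducible (P.comp (-(X ^ 2))) := by
  intro hcomp
  classical
  set q := Fintype.card F with hqdef
  have hq1 : 1 < q := Fintype.one_lt_card
  set n := P.natDegree with hndef
  -- P(0) ≠ 0 and P(0) = c * c
  have hP0 : P.eval 0 ≠ 0 := by
    intro h
    rw [h, quadraticChar_zero] at hleg
    exact zero_ne_one hleg
  obtain ⟨c, hc⟩ : IsSquare (P.eval 0) := (quadraticChar_one_iff_isSquare hP0).mp hleg
  have hcne : c ≠ 0 := by
    rintro rfl
    apply hP0
    simpa using hc
  -- the field K = F[T]/(P)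
  haveI : Fact (Irreducible P) := ⟨hirr⟩
  set K := AdjoinRoot P with hKdef
  set φ : F →+* K := algebraMap F K with hφdef
  have hφ : Function.Injective φ := (algebraMap F K).injective
  let pb : PowerBasis F K := AdjoinRoot.powerBasis hP.ne_zero
  haveI : FiniteDimensional F K := Module.Finite.of_basis pb.basis
  haveI : Finite K := Module.finite_of_finite F
  haveI : Fintype K := Fintype.ofFinite K
  have hrank : Module.finrank F K = n := by
    rw [pb.finrank]; rfl
  have hcard : Fintype.card K = q ^ n := by
    rw [Module.card_eq_pow_finrank (K := F) (V := K), hrank]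
  -- the root t
  set t : K := AdjoinRoot.root P with htdef
  have haevalt : (aeval t) P = 0 := by
    rw [AdjoinRoot.aeval_eq, AdjoinRoot.mk_self]
  have htne : t ≠ 0 := by
    intro h
    have h0 : (aeval (0 : K)) P = 0 := h ▸ haevalt
    rw [Polynomial.aeval_def, Polynomial.eval₂_at_zero] at h0
    have : P.coeff 0 = 0 := by
      apply hφ
      rw [h0, map_zero]
    rw [Polynomial.coeff_zero_eq_eval_zero] at this
    exact hP0 this
  -- fixed points of x ↦ x ^ q lie in the image of F
  have fixed : ∀ x : K, x ^ q = x → ∃ a : F, φ a = x := by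
    intro x hx
    by_contra hcon
    push_neg at hcon
    have hxmem : x ∉ Finset.image φ Finset.univ := by
      simp only [Finset.mem_image, Finset.mem_univ, true_and]
      rintro ⟨a, ha⟩
      exact hcon a ha
    have hne : (X ^ q - X : K[X]) ≠ 0 := FiniteField.X_pow_card_sub_X_ne_zero K hq1
    have hsub : insert x (Finset.image φ Finset.univ) ⊆ (X ^ q - X : K[X]).roots.toFinset := by
      intro y hy
      rw [Multiset.mem_toFinset, Polynomial.mem_roots hne]
      rcases Finset.mem_insert.mp hy with rfl | hy
      · simp [Polynomial.IsRoot, hx]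
      · obtain ⟨a, -, rfl⟩ := Finset.mem_image.mp hy
        simp only [Polynomial.IsRoot, Polynomial.eval_sub, Polynomial.eval_pow,
          Polynomial.eval_X]
        rw [← map_pow, FiniteField.pow_card, sub_self]
    have h1 : q + 1 ≤ ((X ^ q - X : K[X]).roots.toFinset).card := by
      have hcins : (insert x (Finset.image φ Finset.univ)).card = q + 1 := by
        rw [Finset.card_insert_of_notMem hxmem,
          Finset.card_image_of_injective _ hφ, Finset.card_univ]
      rw [← hcins]
      exact Finset.card_le_card hsub
    have h2 : ((X ^ q - X : K[X]).roots.toFinset).card ≤ q := by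
      calc ((X ^ q - X : K[X]).roots.toFinset).card
          ≤ Multiset.card (X ^ q - X : K[X]).roots := Multiset.toFinset_card_le _
        _ ≤ (X ^ q - X : K[X]).natDegree := Polynomial.card_roots' _
        _ = q := FiniteField.X_pow_card_sub_X_natDegree_eq K hq1
    omega
  -- the Frobenius x ↦ x ^ q as a ring hom on K
  obtain ⟨p, hpchar⟩ := CharP.exists F
  haveI : CharP F p := hpchar
  haveI : CharP K p := charP_of_injective_ringHom hφ p
  obtain ⟨k, hpp, hqk⟩ := FiniteField.card F p
  haveI : Fact p.Prime := ⟨hpp⟩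
  set Fr : K →+* K := iterateFrobenius K p k with hFrdef
  have hFr : ∀ x : K, Fr x = x ^ q := by
    intro x
    have hq' : q = p ^ (k : ℕ) := hqk
    rw [hq']
    rfl
  -- the product of conjugate factors
  set f : ℕ → K[X] := fun i => X - C (t ^ q ^ i) with hfdef
  set G : K[X] := ∏ i ∈ range n, f i with hGdef
  have hfn0 : f n = f 0 := by
    show X - C (t ^ q ^ n) = X - C (t ^ q ^ 0)
    rw [← hcard, FiniteField.pow_card]
    simp
  have hmapG : G.map Fr = G := by
    have h1 : G.map Fr = ∏ i ∈ range n, f (i + 1) := by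
      rw [hGdef, Polynomial.map_prod]
      refine Finset.prod_congr rfl fun i _ => ?_
      show (X - C (t ^ q ^ i)).map Fr = X - C (t ^ q ^ (i + 1))
      rw [Polynomial.map_sub, Polynomial.map_X, Polynomial.map_C, hFr,
        ← pow_mul, ← pow_succ]
    rw [h1]
    have h2 := Finset.prod_range_succ' f n
    have h3 := Finset.prod_range_succ f n
    have h4 : (∏ i ∈ range n, f (i + 1)) * f 0 = (∏ i ∈ range n, f i) * f 0 := by
      rw [← h2, h3, hfn0]
    have hf0 : f 0 ≠ 0 := by
      show X - C (t ^ q ^ 0) ≠ 0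
      exact X_sub_C_ne_zero _
    exact mul_right_cancel₀ hf0 h4
  -- G lifts to a monic polynomial g over F
  have hGlifts : G ∈ Polynomial.lifts φ := by
    rw [Polynomial.lifts_iff_coeff_lifts]
    intro j
    refine fixed (G.coeff j) ?_
    have hco := congrArg (fun R : K[X] => R.coeff j) hmapG
    simpa [Polynomial.coeff_map, hFr] using hco
  have hGmonic : G.Monic := monic_prod_of_monic _ _ fun i _ => monic_X_sub_C _
  obtain ⟨g, hgmap, hgdeg, hgmonic⟩ :=
    Polynomial.lifts_and_degree_eq_and_monic hGlifts hGmonic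
  -- g = P
  have hGnat : G.natDegree = n := by
    rw [hGdef, Polynomial.natDegree_prod _ _ fun i _ => X_sub_C_ne_zero _]
    have h10 : ∀ i ∈ range n, (f i).natDegree = 1 := fun i _ => Polynomial.natDegree_X_sub_C _
    rw [Finset.sum_congr rfl h10, Finset.sum_const, card_range, smul_eq_mul, mul_one]
  have hgaeval : (aeval t) g = 0 := by
    rw [Polynomial.aeval_def, ← Polynomial.eval_map, hgmap, hGdef, Polynomial.eval_prod]
    refine Finset.prod_eq_zero (Finset.mem_range.mpr hdeg) ?_
    simp [hfdef]
  have hPdvd : P ∣ g := by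
    rw [← AdjoinRoot.mk_eq_zero]
    rw [← AdjoinRoot.aeval_eq]
    exact hgaeval
  have hgP : g = P := by
    obtain ⟨v, hv⟩ := hPdvd
    have hgn : g.natDegree = n := by
      rw [Polynomial.natDegree_eq_of_degree_eq hgdeg, hGnat]
    have hvmonic : v.Monic := hP.of_mul_monic_left (hv ▸ hgmonic)
    have hvdeg : v.natDegree = 0 := by
      have h8 : P.natDegree + v.natDegree = n := by
        rw [← Polynomial.natDegree_mul hP.ne_zero hvmonic.ne_zero, ← hv, hgn]
      have h9 : P.natDegree = n := hndef.symm
      omega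
    rw [hv, hvmonic.natDegree_eq_zero.mp hvdeg, mul_one]
  -- the key identity φ (P(0)) = (-1)^n * t^d
  set d := ∑ i ∈ range n, q ^ i with hddef
  have hkey : φ (P.eval 0) = (-1 : K) ^ n * t ^ d := by
    have h1 : φ (P.eval 0) = G.eval 0 := by
      calc φ (P.eval 0) = φ (g.eval 0) := by rw [hgP]
        _ = (g.map φ).eval 0 := (Polynomial.eval_zero_map φ g).symm
        _ = G.eval 0 := by rw [hgmap]
    rw [h1, hGdef, Polynomial.eval_prod]
    have h2 : ∀ i ∈ range n, (f i).eval 0 = -1 * t ^ q ^ i := by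
      intro i _
      simp [hfdef, neg_one_mul]
    rw [Finset.prod_congr rfl h2, Finset.prod_mul_distrib, Finset.prod_const, card_range,
      Finset.prod_pow_eq_pow_sum]
  have hparity : (-1 : K) ^ d = (-1 : K) ^ n := by
    rw [hddef, ← Finset.prod_pow_eq_pow_sum]
    have h2 : ∀ i ∈ range n, (-1 : K) ^ q ^ i = -1 := by
      intro i _
      exact Odd.neg_one_pow (hq.pow)
    rw [Finset.prod_congr rfl h2, Finset.prod_const, card_range]
  have hmt : (-t) ^ d = φ (P.eval 0) := by
    rw [neg_pow, hparity, hkey]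
  -- exponent arithmetic
  set m := q / 2 with hmdef
  have hoddq : q % 2 = 1 := Nat.odd_iff.mp hq
  have h2m : 2 * m + 1 = q := by omega
  have hgeoZ : ((q : ℤ) - 1) * (∑ i ∈ range n, (q : ℤ) ^ i) = (q : ℤ) ^ n - 1 := by
    rw [mul_comm]
    exact geom_sum_mul _ _
  have hdZ : (d : ℤ) = ∑ i ∈ range n, (q : ℤ) ^ i := by
    rw [hddef]
    push_cast
    rfl
  have hq2m : (q : ℤ) - 1 = 2 * m := by
    have := h2m
    push_cast [← this]
    ring
  have hqnZ : (q : ℤ) ^ n = 2 * ((d : ℤ) * m) + 1 := by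
    have h5 : ((q : ℤ) - 1) * d = 2 * ((d : ℤ) * m) := by rw [hq2m]; ring
    rw [← hdZ] at hgeoZ
    linarith [hgeoZ, h5]
  have hqnN : q ^ n = 2 * (d * m) + 1 := by exact_mod_cast hqnZ
  have hdm : Fintype.card K / 2 = d * m := by
    rw [hcard]
    omega
  -- -t is a square in K
  have hchar2 : ringChar K ≠ 2 := by
    intro h
    have heven := FiniteField.even_card_iff_char_two.mp h
    have hoddK : Fintype.card K % 2 = 1 := by
      rw [hcard]
      have hoq : Odd (q ^ n) := hq.pow
      rw [Nat.odd_iff] at hoq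
      exact hoq
    omega
  have hsq : IsSquare (-t) := by
    rw [FiniteField.isSquare_iff hchar2 (neg_ne_zero.mpr htne), hdm, pow_mul, hmt]
    have hφc : φ (P.eval 0) = φ c ^ 2 := by rw [hc, map_mul, sq]
    rw [hφc, ← pow_mul]
    have h2mq : 2 * m = q - 1 := by omega
    rw [h2mq, ← map_pow, FiniteField.pow_card_sub_one_eq_one c hcne, map_one]
  obtain ⟨u, hu⟩ := hsq
  -- u is a root of P.comp (-(X^2))
  have hueval : (aeval u) (P.comp (-(X ^ 2))) = 0 := by
    rw [Polynomial.aeval_comp]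
    have h6 : (aeval u) (-(X ^ 2) : F[X]) = t := by
      simp only [map_neg, map_pow, Polynomial.aeval_X]
      rw [sq, ← hu, neg_neg]
    rw [h6, haevalt]
  -- degree contradiction
  have hint : IsIntegral F u := IsIntegral.of_finite F u
  have hdvd2 : minpoly F u ∣ P.comp (-(X ^ 2)) := minpoly.dvd F u hueval
  have hassoc : Associated (minpoly F u) (P.comp (-(X ^ 2))) :=
    (minpoly.irreducible hint).associated_of_dvd hcomp hdvd2
  have hdeg2 : (P.comp (-(X ^ 2))).natDegree = 2 * n := by
    rw [Polynomial.natDegree_comp]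
    have h7 : (-(X ^ 2) : F[X]).natDegree = 2 := by
      rw [Polynomial.natDegree_neg, Polynomial.natDegree_X_pow]
    rw [h7, mul_comm]
  have hle : (minpoly F u).natDegree ≤ n := by
    rw [← hrank]
    exact minpoly.natDegree_le u
  have heq2n : (minpoly F u).natDegree = 2 * n := by
    obtain ⟨v, hv⟩ := hassoc
    have hvne : (v : F[X]) ≠ 0 := v.isUnit.ne_zero
    rw [← hv, Polynomial.natDegree_mul (minpoly.ne_zero hint) hvne,
      Polynomial.natDegree_eq_zero_of_isUnit v.isUnit] at hdeg2
    omega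
  omega
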